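/- Let v₁, v₂ ∈ ℝ³ be orthonormal and let w₁, w₂ ∈ ℝ³. Define A = w₁ ⊗ v₁ + w₂ ⊗ v₂ and B = v₁ ⊗ v₁ + v₂ ⊗ v₂ (3×3 matrices). Then ‖A‖_F² = ‖w₁‖² + ‖w₂‖², ‖B‖_F² = 2, and ⟨A, A − B⟩_F ≥ ½(‖w₁‖² + ‖w₂‖²) − 1 ≥ ‖w₁‖‖w₂‖ − 1 ≥ √(‖w₁‖²‖w₂‖² − (w₁·w₂)²) − 1. -/
import Mathlib


open RealInnerProductSpace

lemma rank_one_frobenius_helper (a b c d : EuclideanSpace ℝ (Fin 3)) :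
    (∑ i, ∑ j, (a i * b j) * (c i * d j)) = ⟪a, c⟫ * ⟪b, d⟫ := by
  rw [PiLp.inner_apply, PiLp.inner_apply]
  simp only [RCLike.inner_apply, conj_trivial]
  rw [Finset.sum_mul_sum]
  exact Finset.sum_congr rfl fun i _ => Finset.sum_congr rfl fun j _ => by ring

lemma rank_two_frobenius_helper (x y u z c d e f : EuclideanSpace ℝ (Fin 3)) :
    (∑ i, ∑ j, (x i * y j + u i * z j) * (c i * d j + e i * f j))
      = ⟪x, c⟫ * ⟪y, d⟫ + ⟪x, e⟫ * ⟪y, f⟫ + ⟪u, c⟫ * ⟪z, d⟫ + ⟪u, e⟫ * ⟪z, f⟫ := by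
  have h : ∀ i j : Fin 3, (x i * y j + u i * z j) * (c i * d j + e i * f j)
      = (x i * y j) * (c i * d j) + (x i * y j) * (e i * f j)
        + (u i * z j) * (c i * d j) + (u i * z j) * (e i * f j) := fun i j => by ring
  simp_rw [h, Finset.sum_add_distrib, rank_one_frobenius_helper]

theorem surface_gradient_frobenius_chain
    (v₁ v₂ w₁ w₂ : EuclideanSpace ℝ (Fin 3))
    (hv₁ : ‖v₁‖ = 1) (hv₂ : ‖v₂‖ = 1) (hv : ⟪v₁, v₂⟫ = 0) :
    let A : Matrix (Fin 3) (Fin 3) ℝ := Matrix.vecMulVec w₁ v₁ + Matrix.vecMulVec w₂ v₂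
    let B : Matrix (Fin 3) (Fin 3) ℝ := Matrix.vecMulVec v₁ v₁ + Matrix.vecMulVec v₂ v₂
    (∑ i, ∑ j, (A i j) ^ 2) = ‖w₁‖ ^ 2 + ‖w₂‖ ^ 2 ∧
      (∑ i, ∑ j, (B i j) ^ 2) = 2 ∧
      (∑ i, ∑ j, A i j * (A - B) i j) ≥ (1 / 2) * (‖w₁‖ ^ 2 + ‖w₂‖ ^ 2) - 1 ∧
      (1 / 2) * (‖w₁‖ ^ 2 + ‖w₂‖ ^ 2) - 1 ≥ ‖w₁‖ * ‖w₂‖ - 1 ∧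
      ‖w₁‖ * ‖w₂‖ - 1 ≥
        Real.sqrt (‖w₁‖ ^ 2 * ‖w₂‖ ^ 2 - ⟪w₁, w₂⟫ ^ 2) - 1 := by
  intro A B
  have hv21 : ⟪v₂, v₁⟫ = 0 := by rw [real_inner_comm]; exact hv
  have hv11 : ⟪v₁, v₁⟫ = (1 : ℝ) := by
    rw [real_inner_self_eq_norm_sq, hv₁]; norm_num
  have hv22 : ⟪v₂, v₂⟫ = (1 : ℝ) := by
    rw [real_inner_self_eq_norm_sq, hv₂]; norm_num
  have hw11 : ⟪w₁, w₁⟫ = ‖w₁‖ ^ 2 := by rw [real_inner_self_eq_norm_sq]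
  have hw22 : ⟪w₂, w₂⟫ = ‖w₂‖ ^ 2 := by rw [real_inner_self_eq_norm_sq]
  have hAdef : ∀ i j, A i j = w₁ i * v₁ j + w₂ i * v₂ j := fun i j => rfl
  have hBdef : ∀ i j, B i j = v₁ i * v₁ j + v₂ i * v₂ j := fun i j => rfl
  -- ‖A‖_F²
  have hAA : (∑ i, ∑ j, (A i j) ^ 2) = ‖w₁‖ ^ 2 + ‖w₂‖ ^ 2 := by
    have h : ∀ i j, (A i j) ^ 2
        = (w₁ i * v₁ j + w₂ i * v₂ j) * (w₁ i * v₁ j + w₂ i * v₂ j) := fun i j => by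
      rw [hAdef]; ring
    simp_rw [h]
    rw [rank_two_frobenius_helper]
    rw [hv11, hv22, hv, hv21, hw11, hw22]
    ring
  -- ‖B‖_F²
  have hBB : (∑ i, ∑ j, (B i j) ^ 2) = 2 := by
    have h : ∀ i j, (B i j) ^ 2
        = (v₁ i * v₁ j + v₂ i * v₂ j) * (v₁ i * v₁ j + v₂ i * v₂ j) := fun i j => by
      rw [hBdef]; ring
    simp_rw [h]
    rw [rank_two_frobenius_helper]
    rw [hv11, hv22, hv, hv21]
    ring
  -- ⟨A, B⟩_F
  have hAB : (∑ i, ∑ j, A i j * B i j) = ⟪w₁, v₁⟫ + ⟪w₂, v₂⟫ := by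
    have h : ∀ i j, A i j * B i j
        = (w₁ i * v₁ j + w₂ i * v₂ j) * (v₁ i * v₁ j + v₂ i * v₂ j) := fun i j => by
      rw [hAdef, hBdef]
    simp_rw [h]
    rw [rank_two_frobenius_helper]
    rw [hv11, hv22, hv, hv21]
    ring
  have ha : (0 : ℝ) ≤ ‖w₁‖ := norm_nonneg _
  have hb : (0 : ℝ) ≤ ‖w₂‖ := norm_nonneg _
  refine ⟨hAA, hBB, ?_, ?_, ?_⟩
  · -- ⟨A, A-B⟩
    have hsplit : (∑ i, ∑ j, A i j * (A - B) i j)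
        = (∑ i, ∑ j, (A i j) ^ 2) - (∑ i, ∑ j, A i j * B i j) := by
      have h : ∀ i j, A i j * (A - B) i j = (A i j) ^ 2 - A i j * B i j := fun i j => by
        simp [Matrix.sub_apply]; ring
      simp_rw [h, Finset.sum_sub_distrib]
    rw [ge_iff_le, hsplit, hAA, hAB]
    have h1 : ⟪w₁, v₁⟫ ≤ ‖w₁‖ := by
      calc ⟪w₁, v₁⟫ ≤ ‖w₁‖ * ‖v₁‖ := real_inner_le_norm _ _
        _ = ‖w₁‖ := by rw [hv₁, mul_one]
    have h2 : ⟪w₂, v₂⟫ ≤ ‖w₂‖ := by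
      calc ⟪w₂, v₂⟫ ≤ ‖w₂‖ * ‖v₂‖ := real_inner_le_norm _ _
        _ = ‖w₂‖ := by rw [hv₂, mul_one]
    nlinarith [sq_nonneg (‖w₁‖ - 1), sq_nonneg (‖w₂‖ - 1)]
  · nlinarith [sq_nonneg (‖w₁‖ - ‖w₂‖)]
  · have hle : Real.sqrt (‖w₁‖ ^ 2 * ‖w₂‖ ^ 2 - ⟪w₁, w₂⟫ ^ 2) ≤ ‖w₁‖ * ‖w₂‖ := by
      calc Real.sqrt (‖w₁‖ ^ 2 * ‖w₂‖ ^ 2 - ⟪w₁, w₂⟫ ^ 2)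
          ≤ Real.sqrt ((‖w₁‖ * ‖w₂‖) ^ 2) := by
            apply Real.sqrt_le_sqrt; nlinarith [sq_nonneg ⟪w₁, w₂⟫]
        _ = ‖w₁‖ * ‖w₂‖ := Real.sqrt_sq (mul_nonneg ha hb)
    linarith
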